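/- arXiv:0910.1545 — 5 statements merged into one kernel-verified Lean document; each statement's English description precedes it below -/
import Mathlib

section
/- For every M > 0 and C > 4M there exists ε > 0 such that for all a with |a| < ε, all τ with |τ| = 1, and all Φ with |Φ| ≤ 4M, the polynomial r ↦ R_a(r,τ,Φ) has a unique root r_a(τ,Φ) in the interval (3M - C·|a|·K, 3M + C·|a|·K) for some constant K depending only on M, and this root is simple (the derivative in r is nonzero there). -/
private lemma kerr_aux_right (M a τ Φ δ : ℝ) (hM : 0 < M) (hτ2 : τ^2 = 1)
    (hδ0 : 0 ≤ δ) (hδM : δ ≤ M/2)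
    (hq1 : a*τ*Φ ≤ δ*M/2) (hq2 : -(δ*M/2) ≤ a*τ*Φ)
    (ha2 : a^2 ≤ δ*M/128) (hΦ2 : Φ^2 ≤ 16*M^2) :
    0 ≤ ((3*M+δ)^2+a^2)*((3*M+δ)^3-3*M*(3*M+δ)^2+a^2*(3*M+δ)+a^2*M)*τ^2
        - 2*a*M*((3*M+δ)^2-a^2)*τ*Φ - a^2*((3*M+δ)-M)*Φ^2 := by
  rw [hτ2]
  have hsa : a^2 ≤ (3*M+δ)^2 := by nlinarith
  have hA : 81*M^4*δ ≤ ((3*M+δ)^2+a^2)*((3*M+δ)^3-3*M*(3*M+δ)^2+a^2*(3*M+δ)+a^2*M) := by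
    have e : ((3*M+δ)^2+a^2)*((3*M+δ)^3-3*M*(3*M+δ)^2+a^2*(3*M+δ)+a^2*M) - 81*M^4*δ
        = δ*((3*M+δ)^4 - 81*M^4) + a^2*((3*M+δ)^2*(4*M+δ) + (3*M+δ)^2*δ)
          + a^4*(4*M+δ) := by ring
    have t1 : (0:ℝ) ≤ δ*((3*M+δ)^4 - 81*M^4) := by
      apply mul_nonneg hδ0
      nlinarith [sq_nonneg δ, sq_nonneg (δ*δ), mul_nonneg hδ0 hM.le,
        mul_nonneg (mul_nonneg hδ0 hM.le) hM.le,
        mul_nonneg (mul_nonneg (mul_nonneg hδ0 hM.le) hM.le) hM.le,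
        mul_nonneg (mul_nonneg hδ0 hδ0) hδ0]
    have t2 : (0:ℝ) ≤ a^2*((3*M+δ)^2*(4*M+δ) + (3*M+δ)^2*δ) := by positivity
    have t3 : (0:ℝ) ≤ a^4*(4*M+δ) := by positivity
    linarith
  have hE1 : 2*a*M*((3*M+δ)^2-a^2)*τ*Φ ≤ 13*M^4*δ := by
    have key : 2*M*((3*M+δ)^2-a^2)*(a*τ*Φ) ≤ 2*M*((3*M+δ)^2-a^2)*(δ*M/2) :=
      mul_le_mul_of_nonneg_left hq1 (by nlinarith)
    have bnd : 2*M*((3*M+δ)^2-a^2)*(δ*M/2) ≤ 13*M^4*δ := by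
      nlinarith [mul_nonneg (mul_nonneg hδ0 (sub_nonneg.2 hδM)) (mul_nonneg hM.le hM.le),
        mul_nonneg (mul_nonneg (mul_nonneg hδ0 hδ0) hδ0) hM.le,
        mul_nonneg (mul_nonneg (sq_nonneg a) hδ0) (mul_nonneg hM.le hM.le),
        mul_nonneg (mul_nonneg hδ0 hδ0) (mul_nonneg hM.le hM.le)]
    calc 2*a*M*((3*M+δ)^2-a^2)*τ*Φ = 2*M*((3*M+δ)^2-a^2)*(a*τ*Φ) := by ring
      _ ≤ 2*M*((3*M+δ)^2-a^2)*(δ*M/2) := key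
      _ ≤ 13*M^4*δ := bnd
  have hE2 : a^2*((3*M+δ)-M)*Φ^2 ≤ M^4*δ := by
    have h0 : (0:ℝ) ≤ ((3*M+δ)-M)*Φ^2 := mul_nonneg (by linarith) (sq_nonneg Φ)
    have h1 : a^2*(((3*M+δ)-M)*Φ^2) ≤ (δ*M/128)*(((3*M+δ)-M)*Φ^2) :=
      mul_le_mul_of_nonneg_right ha2 h0
    have h2 : (δ*M/128)*(((3*M+δ)-M)*Φ^2) ≤ M^4*δ := by
      have hΦ0 := sq_nonneg Φ
      nlinarith [mul_nonneg (mul_nonneg hδ0 hM.le) (sq_nonneg Φ),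
        mul_nonneg (mul_nonneg (mul_nonneg hδ0 hM.le) hM.le) hM.le,
        mul_nonneg (mul_nonneg hδ0 hδ0) (sq_nonneg Φ),
        mul_le_mul_of_nonneg_left hΦ2 (mul_nonneg (mul_nonneg hδ0 hM.le) hM.le),
        mul_le_mul_of_nonneg_left hΦ2 (mul_nonneg (mul_nonneg hδ0 hδ0) hM.le)]
    calc a^2*((3*M+δ)-M)*Φ^2 = a^2*(((3*M+δ)-M)*Φ^2) := by ring
      _ ≤ (δ*M/128)*(((3*M+δ)-M)*Φ^2) := h1
      _ ≤ M^4*δ := h2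
  linarith [hA, hE1, hE2, mul_nonneg (pow_nonneg hM.le 4) hδ0]

private lemma kerr_aux_left (M a τ Φ δ : ℝ) (hM : 0 < M) (hτ2 : τ^2 = 1)
    (hδ0 : 0 ≤ δ) (hδM : δ ≤ M/2)
    (hq1 : a*τ*Φ ≤ δ*M/2) (hq2 : -(δ*M/2) ≤ a*τ*Φ)
    (ha2 : a^2 ≤ δ*M/128) (hΦ2 : Φ^2 ≤ 16*M^2) :
    ((3*M-δ)^2+a^2)*((3*M-δ)^3-3*M*(3*M-δ)^2+a^2*(3*M-δ)+a^2*M)*τ^2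
        - 2*a*M*((3*M-δ)^2-a^2)*τ*Φ - a^2*((3*M-δ)-M)*Φ^2 ≤ 0 := by
  rw [hτ2]
  have hsa : a^2 ≤ (3*M-δ)^2 := by nlinarith [mul_nonneg (mul_nonneg hδ0 hM.le) hM.le]
  have hA : ((3*M-δ)^2+a^2)*((3*M-δ)^3-3*M*(3*M-δ)^2+a^2*(3*M-δ)+a^2*M)
      ≤ -(38*M^4*δ) := by
    have e : ((3*M-δ)^2+a^2)*((3*M-δ)^3-3*M*(3*M-δ)^2+a^2*(3*M-δ)+a^2*M)
        = -(δ*(3*M-δ)^4) + a^2*((3*M-δ)^2*(4*M-2*δ)) + a^4*(4*M-δ) := by ring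
    have t1 : 39*M^4*δ ≤ δ*(3*M-δ)^4 := by
      have h1 : (5*M/2)^4 ≤ (3*M-δ)^4 := by
        apply pow_le_pow_left₀ (by linarith) (by linarith)
      nlinarith [mul_le_mul_of_nonneg_left h1 hδ0, mul_nonneg (pow_nonneg hM.le 4) hδ0]
    have t2 : a^2*((3*M-δ)^2*(4*M-2*δ)) ≤ (δ*M/128)*(9*M^2*(4*M)) := by
      apply mul_le_mul ha2 ?_ (mul_nonneg (sq_nonneg _) (by linarith)) (by positivity)
      have h1 : (3*M-δ)^2 ≤ 9*M^2 := by nlinarith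
      nlinarith [mul_nonneg (mul_nonneg hδ0 hδ0) hM.le, mul_nonneg (sq_nonneg (3*M-δ)) hδ0]
    have t3 : a^4*(4*M-δ) ≤ (δ*M/128)*(δ*M/128)*(4*M) := by
      have : a^4 ≤ (δ*M/128)*(δ*M/128) := by nlinarith [sq_nonneg a]
      apply mul_le_mul this (by linarith) (by linarith) (by positivity)
    nlinarith [t1, t2, t3, mul_nonneg (pow_nonneg hM.le 4) hδ0,
      mul_nonneg (mul_nonneg (mul_nonneg hδ0 hδ0) hM.le) hM.le]
  have hE1 : -(13*M^4*δ) ≤ 2*a*M*((3*M-δ)^2-a^2)*τ*Φ := by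
    have key : 2*M*((3*M-δ)^2-a^2)*(-(δ*M/2)) ≤ 2*M*((3*M-δ)^2-a^2)*(a*τ*Φ) :=
      mul_le_mul_of_nonneg_left hq2 (by nlinarith)
    have bnd : -(13*M^4*δ) ≤ 2*M*((3*M-δ)^2-a^2)*(-(δ*M/2)) := by
      nlinarith [mul_nonneg (mul_nonneg hδ0 hδ0) (mul_nonneg hM.le hM.le),
        mul_nonneg (mul_nonneg (mul_nonneg hδ0 hδ0) hδ0) hM.le,
        mul_nonneg (mul_nonneg (sq_nonneg a) hδ0) (mul_nonneg hM.le hM.le),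
        mul_nonneg (mul_nonneg hδ0 hM.le) (mul_nonneg hM.le hM.le)]
    calc -(13*M^4*δ) ≤ 2*M*((3*M-δ)^2-a^2)*(-(δ*M/2)) := bnd
      _ ≤ 2*M*((3*M-δ)^2-a^2)*(a*τ*Φ) := key
      _ = 2*a*M*((3*M-δ)^2-a^2)*τ*Φ := by ring
  have hE2 : 0 ≤ a^2*((3*M-δ)-M)*Φ^2 :=
    mul_nonneg (mul_nonneg (sq_nonneg a) (by linarith)) (sq_nonneg Φ)
  linarith [hA, hE1, hE2, mul_nonneg (pow_nonneg hM.le 4) hδ0]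

private lemma kerr_aux_deriv (M a τ Φ s : ℝ) (hM : 0 < M) (hτ2 : τ^2 = 1)
    (ha2 : a^2 ≤ (M/30)^2) (hq1 : a*τ*Φ ≤ 2*M^2/15) (hq2 : -(2*M^2/15) ≤ a*τ*Φ)
    (hΦ2 : Φ^2 ≤ 16*M^2) (hs1 : 5*M/2 ≤ s) (hs2 : s ≤ 7*M/2) :
    0 < (2*s*(s^3-3*M*s^2+a^2*s+a^2*M) + (s^2+a^2)*(3*s^2-6*M*s+a^2))*τ^2
        - 4*a*M*s*τ*Φ - a^2*Φ^2 := by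
  rw [hτ2]
  nlinarith [sq_nonneg (s - 5*M/2), sq_nonneg a, sq_nonneg (s*M), mul_pos hM hM,
    mul_nonneg (sub_nonneg.2 hs1) (sub_nonneg.2 hs1),
    mul_nonneg (mul_nonneg (sub_nonneg.2 hs1) (sub_nonneg.2 hs1)) (sub_nonneg.2 hs1),
    mul_nonneg (sub_nonneg.2 hs1) hM.le,
    mul_nonneg (mul_nonneg (sub_nonneg.2 hs1) hM.le) hM.le,
    mul_nonneg (mul_nonneg (mul_nonneg (sub_nonneg.2 hs1) hM.le) hM.le) hM.le,
    mul_le_mul ha2 hΦ2 (sq_nonneg Φ) (le_of_lt (by positivity)),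
    mul_nonneg (sub_nonneg.2 hq1) (sub_nonneg.2 hs1),
    mul_nonneg (sub_nonneg.2 hq2) (sub_nonneg.2 hs1)]

private lemma kerr_aux_hasDeriv (M a τ Φ : ℝ) (s : ℝ) :
    HasDerivAt (fun s : ℝ => (s^2+a^2)*(s^3-3*M*s^2+a^2*s+a^2*M)*τ^2
            - 2*a*M*(s^2-a^2)*τ*Φ - a^2*(s-M)*Φ^2)
      ((2*s*(s^3-3*M*s^2+a^2*s+a^2*M) + (s^2+a^2)*(3*s^2-6*M*s+a^2))*τ^2
        - 4*a*M*s*τ*Φ - a^2*Φ^2) s := by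
  have h1 : HasDerivAt (fun x : ℝ => x^2+a^2) (2*s) s := by
    simpa using (hasDerivAt_pow 2 s).add_const (a^2)
  have h2 : HasDerivAt (fun x : ℝ => x^3-3*M*x^2+a^2*x+a^2*M)
      (3*s^2 - 6*M*s + a^2) s := by
    have := (((hasDerivAt_pow 3 s).sub ((hasDerivAt_pow 2 s).const_mul (3*M))).add
      ((hasDerivAt_id s).const_mul (a^2))).add_const (a^2*M)
    refine this.congr_deriv ?_
    simp; ring
  have h3 := (h1.mul h2).mul_const (τ^2)
  have h4 : HasDerivAt (fun x : ℝ => 2*a*M*(x^2-a^2)*τ*Φ) (2*a*M*(2*s)*τ*Φ) s := by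
    have := ((((hasDerivAt_pow 2 s).sub_const (a^2)).const_mul (2*a*M)).mul_const τ).mul_const Φ
    refine this.congr_deriv ?_
    simp
  have h5 : HasDerivAt (fun x : ℝ => a^2*(x-M)*Φ^2) (a^2*Φ^2) s := by
    have := (((hasDerivAt_id s).sub_const M).const_mul (a^2)).mul_const (Φ^2)
    refine this.congr_deriv ?_
    simp
  have := (h3.sub h4).sub h5
  refine this.congr_deriv ?_
  ring

set_option maxHeartbeats 2000000 in
/-- Persistence of the simple root `r = 3M` of `R_a(·,τ,Φ)` for small `a`,
uniformly in `|τ| = 1`, `|Φ| ≤ 4M`. -/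
theorem kerr_trapped_root (M C : ℝ) (hM : 0 < M) (hC : 4*M < C) :
    ∃ K > (0:ℝ), ∃ ε > (0:ℝ), ∀ a τ Φ : ℝ, abs a < ε → |τ| = 1 → |Φ| ≤ 4*M →
      ∃ r : ℝ,
        (r ∈ Set.Icc (3*M - C*abs a*K) (3*M + C*abs a*K) ∧
          (r^2+a^2)*(r^3-3*M*r^2+a^2*r+a^2*M)*τ^2
            - 2*a*M*(r^2-a^2)*τ*Φ - a^2*(r-M)*Φ^2 = 0 ∧
          deriv (fun s : ℝ => (s^2+a^2)*(s^3-3*M*s^2+a^2*s+a^2*M)*τ^2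
            - 2*a*M*(s^2-a^2)*τ*Φ - a^2*(s-M)*Φ^2) r ≠ 0) ∧
        ∀ r' : ℝ, r' ∈ Set.Icc (3*M - C*abs a*K) (3*M + C*abs a*K) →
          (r'^2+a^2)*(r'^3-3*M*r'^2+a^2*r'+a^2*M)*τ^2
            - 2*a*M*(r'^2-a^2)*τ*Φ - a^2*(r'-M)*Φ^2 = 0 → r' = r := by
  have hC0 : 0 < C := lt_trans (by positivity) hC
  refine ⟨2/M, by positivity, min (M/30) (M^2/(4*C)), by positivity, ?_⟩
  intro a τ Φ ha hτ hΦ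
  set f : ℝ → ℝ := fun s : ℝ => (s^2+a^2)*(s^3-3*M*s^2+a^2*s+a^2*M)*τ^2
            - 2*a*M*(s^2-a^2)*τ*Φ - a^2*(s-M)*Φ^2 with hfdef
  have hτ2 : τ^2 = 1 := by
    have := sq_abs τ
    rw [hτ] at this
    simpa using this.symm
  -- basic bounds on |a|
  have hb0 : (0:ℝ) ≤ |a| := abs_nonneg a
  have hb1 : |a| < M/30 := lt_of_lt_of_le ha (min_le_left _ _)
  have hb2 : |a| < M^2/(4*C) := lt_of_lt_of_le ha (min_le_right _ _)
  set δ : ℝ := C * |a| * (2/M) with hδdef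
  have hδ0 : 0 ≤ δ := by positivity
  have hδM : δ ≤ M/2 := by
    have h : |a| * (4*C) < M^2 := (lt_div_iff₀ (by positivity)).mp hb2
    rw [hδdef, show C * |a| * (2/M) = C * |a| * 2 / M by ring,
      div_le_div_iff₀ hM (by norm_num : (0:ℝ) < 2)]
    nlinarith
  have hδ8 : 8 * |a| ≤ δ := by
    rw [hδdef, show C * |a| * (2/M) = C * |a| * 2 / M by ring, le_div_iff₀ hM]
    nlinarith [mul_le_mul_of_nonneg_left hC.le hb0]
  -- bounds used by the aux lemmas
  have hΦ2 : Φ^2 ≤ 16*M^2 := by nlinarith [abs_nonneg Φ, sq_abs Φ, le_abs_self Φ, neg_abs_le Φ]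
  have hqabs : |a*τ*Φ| ≤ |a| * (4*M) := by
    rw [abs_mul, abs_mul, hτ, mul_one]
    exact mul_le_mul_of_nonneg_left hΦ hb0
  have hq1 : a*τ*Φ ≤ δ*M/2 := by
    have := (le_abs_self (a*τ*Φ)).trans hqabs
    nlinarith [mul_le_mul_of_nonneg_right hδ8 hM.le]
  have hq2 : -(δ*M/2) ≤ a*τ*Φ := by
    have := (neg_abs_le (a*τ*Φ))
    have h2 := hqabs
    nlinarith [mul_le_mul_of_nonneg_right hδ8 hM.le]
  have ha2δ : a^2 ≤ δ*M/128 := by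
    have h1 : a^2 = |a| * |a| := by rw [← abs_mul, abs_mul_self]; ring
    have h2 : |a| ≤ δ/8 := by linarith
    have h3 : |a| ≤ M/16 := by nlinarith
    calc a^2 = |a| * |a| := h1
      _ ≤ δ/8 * (M/16) := mul_le_mul h2 h3 hb0 (by linarith)
      _ = δ*M/128 := by ring
  have ha2M : a^2 ≤ (M/30)^2 := by
    have h1 : a^2 = |a| * |a| := by rw [← abs_mul, abs_mul_self]; ring
    nlinarith
  have h4M : |a| * (4*M) ≤ 2*M^2/15 := by
    nlinarith [mul_le_mul_of_nonneg_right hb1.le (by positivity : (0:ℝ) ≤ 4*M)]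
  have hq1M : a*τ*Φ ≤ 2*M^2/15 :=
    ((le_abs_self (a*τ*Φ)).trans hqabs).trans h4M
  have hq2M : -(2*M^2/15) ≤ a*τ*Φ := by
    linarith [neg_abs_le (a*τ*Φ), hqabs, h4M]
  -- derivative facts
  have hder : ∀ s : ℝ, HasDerivAt f
      ((2*s*(s^3-3*M*s^2+a^2*s+a^2*M) + (s^2+a^2)*(3*s^2-6*M*s+a^2))*τ^2
        - 4*a*M*s*τ*Φ - a^2*Φ^2) s := fun s => kerr_aux_hasDeriv M a τ Φ s
  have hcont : Continuous f := Differentiable.continuous (fun s => (hder s).differentiableAt)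
  have hlo : (3*M - δ) ≤ (3*M + δ) := by linarith
  have hDpos : ∀ s ∈ Set.Icc (3*M - δ) (3*M + δ), 0 < deriv f s := by
    intro s hs
    rw [(hder s).deriv]
    exact kerr_aux_deriv M a τ Φ s hM hτ2 ha2M hq1M hq2M hΦ2
      (by have := hs.1; linarith) (by have := hs.2; linarith)
  have hmono : StrictMonoOn f (Set.Icc (3*M - δ) (3*M + δ)) := by
    apply strictMonoOn_of_deriv_pos (convex_Icc _ _) hcont.continuousOn
    intro x hx
    rw [interior_Icc] at hx
    exact hDpos x ⟨hx.1.le, hx.2.le⟩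
  have hFlo : f (3*M - δ) ≤ 0 :=
    kerr_aux_left M a τ Φ δ hM hτ2 hδ0 hδM hq1 hq2 ha2δ hΦ2
  have hFhi : 0 ≤ f (3*M + δ) :=
    kerr_aux_right M a τ Φ δ hM hτ2 hδ0 hδM hq1 hq2 ha2δ hΦ2
  obtain ⟨r, hrmem, hFr⟩ :=
    intermediate_value_Icc hlo hcont.continuousOn ⟨hFlo, hFhi⟩
  refine ⟨r, ⟨hrmem, hFr, ?_⟩, ?_⟩
  · rw [(hder r).deriv]
    exact ne_of_gt (kerr_aux_deriv M a τ Φ r hM hτ2 ha2M hq1M hq2M hΦ2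
      (by have := hrmem.1; linarith) (by have := hrmem.2; linarith))
  · intro r' hr' heq
    exact hmono.injOn hr' hrmem (heq.trans hFr.symm)
end

section
/- Let V : [r₁,r₂] → ℝ be continuous with c ≤ V(r) ≤ C for constants 0 < c ≤ C, and let Δ : [r₁,r₂] → ℝ be continuous with c ≤ Δ(r) ≤ C. Suppose w ∈ C²([r₁,r₂]) solves Δ(r)w''(r) + V(r)w(r) = g(r) with w(r₁) = w'(r₁) = 0. Then there is a constant K depending only on c, C, r₂ - r₁ such that for all r ∈ [r₁,r₂]: |w(r)| + |w'(r)| ≤ K·‖g‖_{L²([r₁,r₂])}. -/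
set_option maxHeartbeats 1000000


/-- Case 1 (bounded potential) energy estimate: if `Δ w'' + V w = g` on
`[r₁,r₂]` with `c ≤ V, Δ ≤ C` and vanishing Cauchy data at `r₁`, then
`|w| + |w'| ≤ K ‖g‖_{L²}` with `K = K(c, C, r₂ - r₁)`. -/
theorem ode_bounded_potential_estimate (c C L : ℝ) (hc : 0 < c) (hcC : c ≤ C)
    (hL : 0 < L) :
    ∃ K > (0:ℝ), ∀ r₁ r₂ : ℝ, r₂ - r₁ = L →
      ∀ V Δ w w' w'' g : ℝ → ℝ,
      ContinuousOn V (Set.Icc r₁ r₂) →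
      (∀ r ∈ Set.Icc r₁ r₂, c ≤ V r ∧ V r ≤ C) →
      ContinuousOn Δ (Set.Icc r₁ r₂) →
      (∀ r ∈ Set.Icc r₁ r₂, c ≤ Δ r ∧ Δ r ≤ C) →
      (∀ r ∈ Set.Icc r₁ r₂, HasDerivAt w (w' r) r) →
      (∀ r ∈ Set.Icc r₁ r₂, HasDerivAt w' (w'' r) r) →
      ContinuousOn w'' (Set.Icc r₁ r₂) →
      ContinuousOn g (Set.Icc r₁ r₂) →
      (∀ r ∈ Set.Icc r₁ r₂, Δ r * w'' r + V r * w r = g r) →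
      w r₁ = 0 → w' r₁ = 0 →
      ∀ r ∈ Set.Icc r₁ r₂,
        |w r| + |w' r| ≤ K * Real.sqrt (∫ s in r₁..r₂, (g s)^2) := by
  have hc' : (0:ℝ) < min c 1 := lt_min hc one_pos
  set A : ℝ := (C + 2) / min c 1 with hAdef
  have hC : 0 < C := lt_of_lt_of_le hc hcC
  have hAc' : A * min c 1 = C + 2 := div_mul_cancel₀ _ hc'.ne'
  have hA : 0 < A := div_pos (by linarith) hc'
  have hAc : C + 2 ≤ A * c := by
    nlinarith [min_le_left c 1, min_le_right c 1]
  have hA2 : C + 2 ≤ A := by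
    nlinarith [min_le_left c 1, min_le_right c 1]
  refine ⟨(1 + 1 / Real.sqrt c) * Real.exp (A * L / 2), by positivity, ?_⟩
  intro r₁ r₂ hLr V Δ w w' w'' g hVc hVb hΔc hΔb hw hw' hw''c hgc hode hw0 hw'0 r hr
  have hr12 : r₁ ≤ r₂ := by linarith
  have hr1r : r₁ ≤ r := hr.1
  have hrr2 : r ≤ r₂ := hr.2
  -- energy
  set E : ℝ → ℝ := fun s => c * (w' s) ^ 2 + (w s) ^ 2 with hEdef
  have hE0 : E r₁ = 0 := by simp [hEdef, hw0, hw'0]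
  have hEnn : ∀ s, 0 ≤ E s := fun s => by positivity
  have hEderiv : ∀ s ∈ Set.Icc r₁ r₂,
      HasDerivAt E (2 * c * w' s * w'' s + 2 * w s * w' s) s := by
    intro s hs
    have h := (((hw' s hs).pow 2).const_mul c).add ((hw s hs).pow 2)
    refine h.congr_deriv ?_
    push_cast
    ring
  -- key pointwise differential inequality
  have hkey : ∀ s ∈ Set.Icc r₁ r₂,
      2 * c * w' s * w'' s + 2 * w s * w' s ≤ A * E s + (g s) ^ 2 := by
    intro s hs
    obtain ⟨hcd, hdC⟩ := hΔb s hs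
    obtain ⟨hcv, hvC⟩ := hVb s hs
    have hdpos : 0 < Δ s := lt_of_lt_of_le hc hcd
    have hqd : Δ s * w'' s = g s - V s * w s := by linarith [hode s hs]
    have key1 : 2 * c * w' s * w'' s ≤
        (w' s) ^ 2 + (g s) ^ 2 + C * ((w' s) ^ 2 + (w s) ^ 2) := by
      rw [← mul_le_mul_iff_of_pos_right hdpos]
      have heq : 2 * c * w' s * w'' s * Δ s
          = 2 * c * w' s * (g s - V s * w s) := by
        linear_combination (2 * c * w' s) * hqd
      rw [heq]
      nlinarith [mul_nonneg hc.le (sq_nonneg (w' s - g s)),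
        mul_nonneg (mul_nonneg hc.le (lt_of_lt_of_le hc hcv).le) (sq_nonneg (w' s + w s)),
        mul_nonneg (sub_nonneg.mpr hcd) (sq_nonneg (w' s)),
        mul_nonneg (sub_nonneg.mpr hcd) (sq_nonneg (g s)),
        mul_nonneg (by nlinarith : (0:ℝ) ≤ C * Δ s - c * V s)
          (add_nonneg (sq_nonneg (w' s)) (sq_nonneg (w s)))]
    have h2 : 2 * w s * w' s ≤ (w s) ^ 2 + (w' s) ^ 2 := by nlinarith [sq_nonneg (w s - w' s)]
    have hAE : A * E s = (A * c) * (w' s) ^ 2 + A * (w s) ^ 2 := by rw [hEdef]; ring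
    nlinarith [sq_nonneg (w' s), sq_nonneg (w s)]
  -- continuity facts
  have hwc : ContinuousOn w (Set.Icc r₁ r₂) :=
    fun s hs => (hw s hs).continuousAt.continuousWithinAt
  have hw'c : ContinuousOn w' (Set.Icc r₁ r₂) :=
    fun s hs => (hw' s hs).continuousAt.continuousWithinAt
  have hEc : ContinuousOn E (Set.Icc r₁ r₂) :=
    (continuousOn_const.mul (hw'c.pow 2)).add (hwc.pow 2)
  have hGc : ContinuousOn (fun t => (g t) ^ 2) (Set.Icc r₁ r₂) := hgc.pow 2
  have hGint : ∀ a ∈ Set.Icc r₁ r₂, ∀ b ∈ Set.Icc r₁ r₂,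
      IntervalIntegrable (fun t => (g t) ^ 2) MeasureTheory.volume a b := by
    intro a ha b hb
    exact (hGc.mono (Set.uIcc_subset_Icc ha hb)).intervalIntegrable
  -- the damped energy
  set H : ℝ → ℝ := fun s => Real.exp (-A * (s - r₁)) * E s with hHdef
  have hH0 : H r₁ = 0 := by simp [hHdef, hE0]
  have hHnn : ∀ s, 0 ≤ H s := fun s => mul_nonneg (Real.exp_pos _).le (hEnn s)
  have hHderiv : ∀ s ∈ Set.Icc r₁ r₂,
      HasDerivAt H (Real.exp (-A * (s - r₁)) *
        ((2 * c * w' s * w'' s + 2 * w s * w' s) - A * E s)) s := by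
    intro s hs
    have hlin : HasDerivAt (fun x : ℝ => -A * (x - r₁)) (-A) s := by
      simpa using ((hasDerivAt_id s).sub_const r₁).const_mul (-A)
    have hexp : HasDerivAt (fun x : ℝ => Real.exp (-A * (x - r₁)))
        (Real.exp (-A * (s - r₁)) * (-A)) s := hlin.exp
    have h := hexp.mul (hEderiv s hs)
    refine h.congr_deriv ?_
    ring
  set φ : ℝ → ℝ := fun s => (∫ t in r₁..s, (g t) ^ 2) - H s with hφdef
  have hφderiv : ∀ x ∈ Set.Ioo r₁ r₂, HasDerivAt φ
      ((g x) ^ 2 - Real.exp (-A * (x - r₁)) *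
        ((2 * c * w' x * w'' x + 2 * w x * w' x) - A * E x)) x := by
    intro x hx
    have hxI : x ∈ Set.Icc r₁ r₂ := Set.Ioo_subset_Icc_self hx
    have hmeas : StronglyMeasurableAtFilter (fun t => (g t) ^ 2) (nhds x)
        MeasureTheory.volume :=
      (hGc.mono Set.Ioo_subset_Icc_self).stronglyMeasurableAtFilter isOpen_Ioo x hx
    have hcont : ContinuousAt (fun t => (g t) ^ 2) x :=
      (hGc x hxI).continuousAt (Icc_mem_nhds hx.1 hx.2)
    have hint := intervalIntegral.integral_hasDerivAt_right
      (hGint r₁ (Set.left_mem_Icc.mpr hr12) x hxI) hmeas hcont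
    exact hint.sub (hHderiv x hxI)
  have hφc : ContinuousOn φ (Set.Icc r₁ r₂) := by
    apply ContinuousOn.sub
    · have h1 : MeasureTheory.IntegrableOn (fun t => (g t) ^ 2)
          (Set.uIcc r₁ r₂) MeasureTheory.volume := by
        rw [Set.uIcc_of_le hr12]; exact hGc.integrableOn_Icc
      have := intervalIntegral.continuousOn_primitive_interval h1
      rwa [Set.uIcc_of_le hr12] at this
    · exact ((Real.continuous_exp.comp
        (continuous_const.mul (continuous_id.sub continuous_const))).continuousOn).mul hEc
  have hmono : MonotoneOn φ (Set.Icc r₁ r₂) := by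
    apply monotoneOn_of_deriv_nonneg (convex_Icc r₁ r₂) hφc
    · intro x hx
      rw [interior_Icc] at hx
      exact (hφderiv x hx).differentiableAt.differentiableWithinAt
    · intro x hx
      rw [interior_Icc] at hx
      have hxI : x ∈ Set.Icc r₁ r₂ := Set.Ioo_subset_Icc_self hx
      rw [(hφderiv x hx).deriv]
      have hexple : Real.exp (-A * (x - r₁)) ≤ 1 := by
        apply Real.exp_le_one_iff.mpr
        nlinarith [hxI.1]
      have hk := hkey x hxI
      have h1 : Real.exp (-A * (x - r₁)) *
          ((2 * c * w' x * w'' x + 2 * w x * w' x) - A * E x)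
          ≤ Real.exp (-A * (x - r₁)) * (g x) ^ 2 :=
        mul_le_mul_of_nonneg_left (by linarith) (Real.exp_pos _).le
      have h2 : Real.exp (-A * (x - r₁)) * (g x) ^ 2 ≤ 1 * (g x) ^ 2 :=
        mul_le_mul_of_nonneg_right hexple (sq_nonneg _)
      nlinarith
  -- Gronwall conclusion
  have hHle : H r ≤ ∫ t in r₁..r, (g t) ^ 2 := by
    have h := hmono (Set.left_mem_Icc.mpr hr12) hr hr1r
    simp only [hφdef, intervalIntegral.integral_same, hH0, sub_zero, zero_sub] at h
    linarith [h]
  have hInn : (0:ℝ) ≤ ∫ t in r₁..r₂, (g t) ^ 2 :=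
    intervalIntegral.integral_nonneg hr12 (fun t _ => sq_nonneg _)
  have hIle : (∫ t in r₁..r, (g t) ^ 2) ≤ ∫ t in r₁..r₂, (g t) ^ 2 := by
    have hsplit := intervalIntegral.integral_add_adjacent_intervals
      (hGint r₁ (Set.left_mem_Icc.mpr hr12) r hr)
      (hGint r hr r₂ (Set.right_mem_Icc.mpr hr12))
    have h2 : (0:ℝ) ≤ ∫ t in r..r₂, (g t) ^ 2 :=
      intervalIntegral.integral_nonneg hrr2 (fun t _ => sq_nonneg _)
    linarith [hsplit]
  have hEr : E r ≤ Real.exp (A * L) * ∫ t in r₁..r₂, (g t) ^ 2 := by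
    have h1 : E r = Real.exp (A * (r - r₁)) * H r := by
      rw [hHdef, ← mul_assoc, ← Real.exp_add]
      ring_nf
      simp
    have hexpmono : Real.exp (A * (r - r₁)) ≤ Real.exp (A * L) := by
      apply Real.exp_le_exp.mpr
      nlinarith
    rw [h1]
    calc Real.exp (A * (r - r₁)) * H r
        ≤ Real.exp (A * L) * H r :=
          mul_le_mul_of_nonneg_right hexpmono (hHnn r)
      _ ≤ Real.exp (A * L) * ∫ t in r₁..r₂, (g t) ^ 2 :=
          mul_le_mul_of_nonneg_left (hHle.trans hIle) (Real.exp_pos _).le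
  set I : ℝ := ∫ t in r₁..r₂, (g t) ^ 2 with hIdef
  have hX : Real.sqrt (Real.exp (A * L) * I) = Real.exp (A * L / 2) * Real.sqrt I := by
    rw [show Real.exp (A * L) = (Real.exp (A * L / 2)) ^ 2 by
      rw [sq, ← Real.exp_add]; ring_nf]
    rw [Real.sqrt_mul (sq_nonneg _), Real.sqrt_sq (Real.exp_pos _).le]
  have hw2 : |w r| ≤ Real.sqrt (Real.exp (A * L) * I) := by
    apply Real.abs_le_sqrt
    have : (w r) ^ 2 ≤ E r := by
      show (w r) ^ 2 ≤ c * (w' r) ^ 2 + (w r) ^ 2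
      nlinarith [sq_nonneg (w' r)]
    linarith [hEr]
  have hw'2 : |w' r| ≤ Real.sqrt (Real.exp (A * L) * I) / Real.sqrt c := by
    have hsq : (w' r) ^ 2 ≤ (Real.exp (A * L) * I) / c := by
      rw [le_div_iff₀ hc]
      have : c * (w' r) ^ 2 ≤ E r := by
        show c * (w' r) ^ 2 ≤ c * (w' r) ^ 2 + (w r) ^ 2
        nlinarith [sq_nonneg (w r)]
      nlinarith [hEr]
    have := Real.abs_le_sqrt hsq
    rwa [Real.sqrt_div (by positivity)] at this
  have hsc : 0 < Real.sqrt c := Real.sqrt_pos.mpr hc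
  calc |w r| + |w' r|
      ≤ Real.sqrt (Real.exp (A * L) * I) + Real.sqrt (Real.exp (A * L) * I) / Real.sqrt c :=
        add_le_add hw2 hw'2
    _ = (1 + 1 / Real.sqrt c) * (Real.exp (A * L / 2) * Real.sqrt I) := by
        rw [← hX]; field_simp
    _ = (1 + 1 / Real.sqrt c) * Real.exp (A * L / 2) * Real.sqrt I := by ring
end

section
/- Let τ ≥ 1 and let V : [r₁,r₂] → ℝ be C¹ with V(r) ≥ cτ² and |V'(r)| ≤ Cτ² for constants 0 < c ≤ C. Let Δ : [r₁,r₂] → ℝ be C¹ with c ≤ Δ ≤ C and |Δ'| ≤ C. If w ∈ C² solves Δ(r)w''(r) + V(r)w(r) = g(r) with w(r₁) = w'(r₁) = 0, then there is K = K(c,C,r₂-r₁), independent of τ, such that τ|w(r)| + |w'(r)| ≤ K‖g‖_{L²([r₁,r₂])} for all r ∈ [r₁,r₂]. -/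
open Real intervalIntegral MeasureTheory Set

set_option maxHeartbeats 1000000 in
/-- Case 2 (hyperbolic) energy estimate: if `Δ w'' + V w = g` with
`V ≈ τ²`, `|V'| ≲ τ²`, and vanishing Cauchy data at `r₁`, then
`τ|w| + |w'| ≤ K ‖g‖_{L²}` uniformly in `τ ≥ 1`. -/
theorem ode_hyperbolic_estimate (c C L : ℝ) (hc : 0 < c) (hcC : c ≤ C)
    (hL : 0 < L) :
    ∃ K > (0:ℝ), ∀ τ : ℝ, 1 ≤ τ → ∀ r₁ r₂ : ℝ, r₂ - r₁ = L →
      ∀ V V' Δ Δ' w w' w'' g : ℝ → ℝ,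
      (∀ r ∈ Set.Icc r₁ r₂, HasDerivAt V (V' r) r) →
      (∀ r ∈ Set.Icc r₁ r₂, c * τ^2 ≤ V r ∧ |V' r| ≤ C * τ^2) →
      (∀ r ∈ Set.Icc r₁ r₂, HasDerivAt Δ (Δ' r) r) →
      (∀ r ∈ Set.Icc r₁ r₂, c ≤ Δ r ∧ Δ r ≤ C ∧ |Δ' r| ≤ C) →
      (∀ r ∈ Set.Icc r₁ r₂, HasDerivAt w (w' r) r) →
      (∀ r ∈ Set.Icc r₁ r₂, HasDerivAt w' (w'' r) r) →
      ContinuousOn w'' (Set.Icc r₁ r₂) →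
      ContinuousOn g (Set.Icc r₁ r₂) →
      (∀ r ∈ Set.Icc r₁ r₂, Δ r * w'' r + V r * w r = g r) →
      w r₁ = 0 → w' r₁ = 0 →
      ∀ r ∈ Set.Icc r₁ r₂,
        τ * |w r| + |w' r| ≤ K * Real.sqrt (∫ s in r₁..r₂, (g s)^2) := by
  set A : ℝ := (2 * C + 1) / c with hA
  have hC : 0 < C := lt_of_lt_of_le hc hcC
  have hApos : 0 < A := div_pos (by linarith) hc
  refine ⟨2 * Real.exp (A * L / 2) / Real.sqrt c, by positivity, ?_⟩
  intro τ hτ r₁ r₂ hr V V' Δ Δ' w w' w'' g hV hVb hΔ hΔb hw hw' hw''c hgc hode hw0 hw'0 r hrmem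
  have hr12 : r₁ ≤ r₂ := by linarith
  have hτ0 : (0:ℝ) < τ := lt_of_lt_of_le one_pos hτ
  -- continuity of the data on Icc
  have hwc : ContinuousOn w (Set.Icc r₁ r₂) := fun x hx =>
    ((hw x hx).continuousAt).continuousWithinAt
  have hw'c : ContinuousOn w' (Set.Icc r₁ r₂) := fun x hx =>
    ((hw' x hx).continuousAt).continuousWithinAt
  have hVc : ContinuousOn V (Set.Icc r₁ r₂) := fun x hx =>
    ((hV x hx).continuousAt).continuousWithinAt
  have hΔc : ContinuousOn Δ (Set.Icc r₁ r₂) := fun x hx =>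
    ((hΔ x hx).continuousAt).continuousWithinAt
  -- integrability of g²
  have hg2c : ContinuousOn (fun s => (g s)^2) (Set.Icc r₁ r₂) := hgc.pow 2
  have hg2i : IntervalIntegrable (fun s => (g s)^2) volume r₁ r₂ := by
    have h := hg2c
    rw [← Set.uIcc_of_le hr12] at h
    exact h.intervalIntegrable
  set I : ℝ := ∫ s in r₁..r₂, (g s)^2 with hI
  have hI0 : 0 ≤ I := intervalIntegral.integral_nonneg hr12 (fun s _ => sq_nonneg _)
  -- the energy
  set E : ℝ → ℝ := fun r => Δ r * (w' r)^2 + V r * (w r)^2 with hE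
  have hEderiv : ∀ x ∈ Set.Icc r₁ r₂, HasDerivAt E
      (Δ' x * (w' x)^2 + Δ x * (2 * w' x * w'' x) + (V' x * (w x)^2 + V x * (2 * w x * w' x))) x := by
    intro x hx
    have h1 : HasDerivAt (fun r => (w' r)^2) (2 * w' x * w'' x) x := by
      simpa using ((hw' x hx).fun_pow 2)
    have h2 : HasDerivAt (fun r => (w r)^2) (2 * w x * w' x) x := by
      simpa using ((hw x hx).fun_pow 2)
    exact ((hΔ x hx).mul h1).add ((hV x hx).mul h2)
  have hEc : ContinuousOn E (Set.Icc r₁ r₂) :=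
    ((hΔc.mul (hw'c.pow 2)).add (hVc.mul (hwc.pow 2)))
  have hE0 : E r₁ = 0 := by simp [hE, hw0, hw'0]
  have hElow : ∀ x ∈ Set.Icc r₁ r₂, c * (w' x)^2 ≤ E x ∧ c * τ^2 * (w x)^2 ≤ E x := by
    intro x hx
    obtain ⟨hV1, _⟩ := hVb x hx
    obtain ⟨hΔ1, _, _⟩ := hΔb x hx
    have hV0 : 0 ≤ V x := le_trans (by positivity) hV1
    simp only [hE]
    constructor
    · nlinarith [mul_nonneg hV0 (sq_nonneg (w x)),
        mul_nonneg (sub_nonneg.2 hΔ1) (sq_nonneg (w' x))]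
    · nlinarith [mul_le_mul_of_nonneg_right hV1 (sq_nonneg (w x)),
        mul_nonneg (le_trans hc.le hΔ1) (sq_nonneg (w' x))]
  -- derivative bound: E' ≤ A E + g²
  have hcA : c * A = 2 * C + 1 := by rw [hA]; field_simp [hc.ne']
  have hEineq : ∀ x ∈ Set.Icc r₁ r₂,
      Δ' x * (w' x)^2 + Δ x * (2 * w' x * w'' x) + (V' x * (w x)^2 + V x * (2 * w x * w' x))
        ≤ A * E x + (g x)^2 := by
    intro x hx
    obtain ⟨hV1, hV2⟩ := hVb x hx
    obtain ⟨hΔ1, hΔ2, hΔ3⟩ := hΔb x hx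
    obtain ⟨hlow1, hlow2⟩ := hElow x hx
    have hodex : Δ x * w'' x = g x - V x * w x := by
      have := hode x hx; linarith
    have h1 : Δ' x * (w' x)^2 ≤ C * (w' x)^2 :=
      mul_le_mul_of_nonneg_right (abs_le.1 hΔ3).2 (sq_nonneg _)
    have h2 : V' x * (w x)^2 ≤ C * τ^2 * (w x)^2 :=
      mul_le_mul_of_nonneg_right (abs_le.1 hV2).2 (sq_nonneg _)
    have h3 : 2 * w' x * g x ≤ (w' x)^2 + (g x)^2 := by nlinarith [sq_nonneg (w' x - g x)]
    have key : C * (w' x)^2 + C * τ^2 * (w x)^2 + (w' x)^2 ≤ A * E x := by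
      rw [hA, div_mul_eq_mul_div, le_div_iff₀ hc]
      have p1 : C * (c * (w' x)^2) ≤ C * E x := mul_le_mul_of_nonneg_left hlow1 hC.le
      have p2 : C * (c * τ^2 * (w x)^2) ≤ C * E x := mul_le_mul_of_nonneg_left hlow2 hC.le
      nlinarith [p1, p2, hlow1]
    have hΔexp : Δ x * (2 * w' x * w'' x) = 2 * w' x * g x - V x * (2 * w x * w' x) := by
      have : Δ x * (2 * w' x * w'' x) = 2 * w' x * (Δ x * w'' x) := by ring
      rw [this, hodex]; ring
    rw [hΔexp]; linarith
  -- the modified energy H and its monotonicity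
  set G : ℝ → ℝ := fun x => ∫ s in r₁..x, (g s)^2 with hG
  set H : ℝ → ℝ := fun x => E x * Real.exp (-A * (x - r₁)) - G x with hH
  have hGcont : ContinuousOn G (Set.Icc r₁ r₂) := by
    have hint : IntegrableOn (fun s => (g s)^2) (Set.uIcc r₁ r₂) volume := by
      rw [Set.uIcc_of_le hr12]
      exact hg2c.integrableOn_Icc
    simpa [hG, Set.uIcc_of_le hr12] using intervalIntegral.continuousOn_primitive_interval hint
  have hHcont : ContinuousOn H (Set.Icc r₁ r₂) := by
    apply ContinuousOn.sub _ hGcont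
    exact hEc.mul ((Real.continuous_exp.comp (continuous_const.mul (continuous_id.sub continuous_const))).continuousOn)
  have hHd : ∀ x ∈ Set.Ioo r₁ r₂, HasDerivAt H
      ((Δ' x * (w' x)^2 + Δ x * (2 * w' x * w'' x) + (V' x * (w x)^2 + V x * (2 * w x * w' x)))
        * Real.exp (-A * (x - r₁))
       + E x * (Real.exp (-A * (x - r₁)) * (-A)) - (g x)^2) x := by
    intro x hx
    have hxI : x ∈ Set.Icc r₁ r₂ := Set.Ioo_subset_Icc_self hx
    have hexp : HasDerivAt (fun r => Real.exp (-A * (r - r₁))) (Real.exp (-A * (x - r₁)) * (-A)) x := by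
      have hin : HasDerivAt (fun r => -A * (r - r₁)) (-A) x := by
        simpa using (((hasDerivAt_id x).sub_const r₁).const_mul (-A))
      simpa using hin.exp
    have hGd : HasDerivAt G ((g x)^2) x := by
      apply intervalIntegral.integral_hasDerivAt_right
      · apply hg2i.mono_set
        rw [Set.uIcc_of_le hx.1.le, Set.uIcc_of_le hr12]
        exact Set.Icc_subset_Icc le_rfl hx.2.le
      · exact ContinuousOn.stronglyMeasurableAtFilter isOpen_Ioo
          (hg2c.mono Set.Ioo_subset_Icc_self) x hx
      · exact hg2c.continuousAt (Icc_mem_nhds hx.1 hx.2)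
    exact ((hEderiv x hxI).mul hexp).sub hGd
  have hHderiv_nonpos : ∀ x ∈ Set.Ioo r₁ r₂, deriv H x ≤ 0 := by
    intro x hx
    have hxI : x ∈ Set.Icc r₁ r₂ := Set.Ioo_subset_Icc_self hx
    rw [(hHd x hx).deriv]
    set e := Real.exp (-A * (x - r₁)) with he
    have he0 : 0 < e := Real.exp_pos _
    have he1 : e ≤ 1 := by
      rw [he, Real.exp_le_one_iff]
      have h0 : 0 ≤ A * (x - r₁) := mul_nonneg hApos.le (by linarith [hx.1])
      linarith
    have t1 : (Δ' x * (w' x)^2 + Δ x * (2 * w' x * w'' x)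
        + (V' x * (w x)^2 + V x * (2 * w x * w' x)) - A * E x) * e ≤ (g x)^2 * e :=
      mul_le_mul_of_nonneg_right (by linarith [hEineq x hxI]) he0.le
    have t2 : (g x)^2 * e ≤ (g x)^2 := mul_le_of_le_one_right (sq_nonneg _) he1
    nlinarith [t1, t2]
  have hHanti : AntitoneOn H (Set.Icc r₁ r₂) := by
    apply antitoneOn_of_deriv_nonpos (convex_Icc r₁ r₂) hHcont
    · intro x hx
      rw [interior_Icc] at hx
      exact ((hHd x hx).differentiableAt).differentiableWithinAt
    · intro x hx
      rw [interior_Icc] at hx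
      exact hHderiv_nonpos x hx
  have hHr₁ : H r₁ = 0 := by
    simp [hH, hG, hE0, intervalIntegral.integral_same]
  have hHle : H r ≤ 0 := by
    rw [← hHr₁]
    exact hHanti ⟨le_rfl, hr12⟩ hrmem hrmem.1
  -- deduce the energy bound
  have hGleI : G r ≤ I := by
    apply intervalIntegral.integral_mono_interval le_rfl hrmem.1 hrmem.2
      (Filter.Eventually.of_forall fun s => sq_nonneg _) hg2i
  have h4 : E r * Real.exp (-A * (r - r₁)) ≤ I := by
    have : H r = E r * Real.exp (-A * (r - r₁)) - G r := rfl
    linarith [hHle, hGleI, this ▸ hHle]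
  have h5 : E r ≤ I * Real.exp (A * (r - r₁)) := by
    have := mul_le_mul_of_nonneg_right h4 (Real.exp_pos (A * (r - r₁))).le
    rwa [mul_assoc, ← Real.exp_add, (by ring : -A * (r - r₁) + A * (r - r₁) = 0),
      Real.exp_zero, mul_one] at this
  have hErI : E r ≤ Real.exp (A * L) * I := by
    have hexple : Real.exp (A * (r - r₁)) ≤ Real.exp (A * L) := by
      apply Real.exp_le_exp.2
      have : r - r₁ ≤ L := by
        have := hrmem.2; linarith
      nlinarith [hApos.le]
    calc E r ≤ I * Real.exp (A * (r - r₁)) := h5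
      _ ≤ I * Real.exp (A * L) := mul_le_mul_of_nonneg_left hexple hI0
      _ = Real.exp (A * L) * I := by ring
  -- final conclusion
  obtain ⟨hlow1r, hlow2r⟩ := hElow r hrmem
  set K : ℝ := 2 * Real.exp (A * L / 2) / Real.sqrt c with hK
  have hsqrtc : (0:ℝ) < Real.sqrt c := Real.sqrt_pos.2 hc
  have lhs0 : 0 ≤ τ * |w r| + |w' r| := by positivity
  have rhs0 : 0 ≤ K * Real.sqrt I := by positivity
  have e1 : (Real.exp (A * L / 2))^2 = Real.exp (A * L) := by
    rw [sq, ← Real.exp_add]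
    congr 1; ring
  have hKI : (K * Real.sqrt I)^2 = 4 * Real.exp (A * L) * I / c := by
    rw [hK, mul_pow, div_pow, mul_pow, Real.sq_sqrt hI0, Real.sq_sqrt hc.le, e1]
    ring
  have sq_le : (τ * |w r| + |w' r|)^2 ≤ (K * Real.sqrt I)^2 := by
    rw [hKI, le_div_iff₀ hc]
    have step1 : (τ * |w r| + |w' r|)^2 ≤ 2*(τ*|w r|)^2 + 2*|w' r|^2 := by
      nlinarith [sq_nonneg (τ*|w r| - |w' r|)]
    have step2 : (τ*|w r|)^2 = τ^2*(w r)^2 := by rw [mul_pow, sq_abs]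
    have step3 : |w' r|^2 = (w' r)^2 := sq_abs _
    have step4 : (τ * |w r| + |w' r|)^2 * c ≤ (2*τ^2*(w r)^2 + 2*(w' r)^2) * c :=
      mul_le_mul_of_nonneg_right (by linarith) hc.le
    linarith [step4, hlow1r, hlow2r, hErI]
  calc τ * |w r| + |w' r| = Real.sqrt ((τ * |w r| + |w' r|)^2) := (Real.sqrt_sq lhs0).symm
    _ ≤ Real.sqrt ((K * Real.sqrt I)^2) := Real.sqrt_le_sqrt sq_le
    _ = K * Real.sqrt I := Real.sqrt_sq rhs0
end

section
/- Let λ ≥ 1 and V : [r₁,r₂] → ℝ continuous with V(r) ≤ -cλ² for a constant c > 0, and Δ continuous with c ≤ Δ ≤ C. If w ∈ C²([r₁,r₂]) solves Δ(r)w''(r) + V(r)w(r) = g(r) with Dirichlet boundary conditions w(r₁) = w(r₂) = 0, then λ²‖w‖_{L²} + λ‖w'‖_{L²} ≤ K‖g‖_{L²} with K depending only on c, C, r₂-r₁. -/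
/-- Case 3 (elliptic) estimate: if `Δ w'' + V w = g` with `V ≤ -cλ²` and
Dirichlet boundary conditions, then `λ²‖w‖_{L²} + λ‖w'‖_{L²} ≤ K‖g‖_{L²}`. -/
theorem ode_elliptic_estimate (c C L : ℝ) (hc : 0 < c) (hcC : c ≤ C)
    (hL : 0 < L) :
    ∃ K > (0:ℝ), ∀ lam : ℝ, 1 ≤ lam → ∀ r₁ r₂ : ℝ, r₂ - r₁ = L →
      ∀ V Δ w w' w'' g : ℝ → ℝ,
      ContinuousOn V (Set.Icc r₁ r₂) →
      (∀ r ∈ Set.Icc r₁ r₂, V r ≤ -c * lam^2) →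
      ContinuousOn Δ (Set.Icc r₁ r₂) →
      (∀ r ∈ Set.Icc r₁ r₂, c ≤ Δ r ∧ Δ r ≤ C) →
      (∀ r ∈ Set.Icc r₁ r₂, HasDerivAt w (w' r) r) →
      (∀ r ∈ Set.Icc r₁ r₂, HasDerivAt w' (w'' r) r) →
      ContinuousOn w'' (Set.Icc r₁ r₂) →
      ContinuousOn g (Set.Icc r₁ r₂) →
      (∀ r ∈ Set.Icc r₁ r₂, Δ r * w'' r + V r * w r = g r) →
      w r₁ = 0 → w r₂ = 0 →
      lam^2 * Real.sqrt (∫ s in r₁..r₂, (w s)^2)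
        + lam * Real.sqrt (∫ s in r₁..r₂, (w' s)^2)
        ≤ K * Real.sqrt (∫ s in r₁..r₂, (g s)^2) := by
  have hC0 : 0 < C := lt_of_lt_of_le hc hcC
  refine ⟨C / c ^ 2 + Real.sqrt (C / (2 * c ^ 3)),
    add_pos_of_pos_of_nonneg (div_pos hC0 (pow_pos hc 2)) (Real.sqrt_nonneg _), ?_⟩
  intro lam hlam r₁ r₂ hr V Δ w w' w'' g hVc hVle hΔc hΔb hw hw' hw''c hgc heq hb1 hb2
  have hle : r₁ ≤ r₂ := by linarith
  have hlam0 : (0:ℝ) < lam := by linarith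
  have huIcc : Set.uIcc r₁ r₂ = Set.Icc r₁ r₂ := Set.uIcc_of_le hle
  have hwc : ContinuousOn w (Set.Icc r₁ r₂) :=
    fun r hr => (hw r hr).continuousAt.continuousWithinAt
  have hw'c : ContinuousOn w' (Set.Icc r₁ r₂) :=
    fun r hr => (hw' r hr).continuousAt.continuousWithinAt
  -- notation for the three integrals
  set M := ∫ s in r₁..r₂, (w s) ^ 2 with hM
  set P := ∫ s in r₁..r₂, (w' s) ^ 2 with hP
  set G := ∫ s in r₁..r₂, (g s) ^ 2 with hG
  -- integrability facts
  have hiw2 : IntervalIntegrable (fun s => (w s) ^ 2) MeasureTheory.volume r₁ r₂ := by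
    apply ContinuousOn.intervalIntegrable; rw [huIcc]; exact hwc.pow 2
  have hiw'2 : IntervalIntegrable (fun s => (w' s) ^ 2) MeasureTheory.volume r₁ r₂ := by
    apply ContinuousOn.intervalIntegrable; rw [huIcc]; exact hw'c.pow 2
  have hig2 : IntervalIntegrable (fun s => (g s) ^ 2) MeasureTheory.volume r₁ r₂ := by
    apply ContinuousOn.intervalIntegrable; rw [huIcc]; exact hgc.pow 2
  have hiww'' : IntervalIntegrable (fun s => w s * w'' s) MeasureTheory.volume r₁ r₂ := by
    apply ContinuousOn.intervalIntegrable; rw [huIcc]; exact hwc.mul hw''c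
  -- integration by parts : ∫ (w')² + ∫ w w'' = 0
  have hibp : (∫ s in r₁..r₂, ((w' s) ^ 2 + w s * w'' s)) = 0 := by
    have h := intervalIntegral.integral_eq_sub_of_hasDerivAt
      (f := fun s => w s * w' s)
      (f' := fun s => (w' s) ^ 2 + w s * w'' s) ?_ (hiw'2.add hiww'')
    · rw [h]; show w r₂ * w' r₂ - w r₁ * w' r₁ = 0; rw [hb1, hb2]; ring
    · intro x hx
      rw [huIcc] at hx
      have hprod := (hw x hx).mul (hw' x hx)
      exact hprod.congr_deriv (by ring)
  have hsplit : P + (∫ s in r₁..r₂, w s * w'' s) = 0 := by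
    rw [hP, ← intervalIntegral.integral_add hiw'2 hiww'']; exact hibp
  -- pointwise estimate
  have hpt : ∀ s ∈ Set.Icc r₁ r₂,
      2*c^4*lam^4*(w s)^2 - 4*C*c^3*lam^2*(w s * w'' s) ≤ 2*C^2*(g s)^2 := by
    intro s hs
    obtain ⟨hd1, hd2⟩ := hΔb s hs
    have hd0 : 0 < Δ s := lt_of_lt_of_le hc hd1
    have heqs := heq s hs
    have hVs := hVle s hs
    rw [← mul_le_mul_iff_right₀ hd0]
    have hsub : Δ s * (w s * w'' s) = w s * g s - V s * (w s)^2 := by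
      linear_combination w s * heqs
    have h4 : (0:ℝ) ≤ 4*C*c^3*lam^2 :=
      mul_nonneg (mul_nonneg (by linarith) (pow_nonneg hc.le 3)) (pow_nonneg hlam0.le 2)
    have t1 : 4*C*c^3*lam^2*(V s * (w s)^2) ≤ 4*C*c^3*lam^2*((-c*lam^2) * (w s)^2) :=
      mul_le_mul_of_nonneg_left (mul_le_mul_of_nonneg_right hVs (sq_nonneg (w s))) h4
    have t2 : 2*c^4*lam^4*(w s)^2 * Δ s ≤ 2*c^4*lam^4*(w s)^2 * C := by
      exact mul_le_mul_of_nonneg_left hd2 (by positivity)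
    have t3 : 2*C^2*(g s)^2 * c ≤ 2*C^2*(g s)^2 * Δ s := by
      exact mul_le_mul_of_nonneg_left hd1 (by positivity)
    have t4 : (0:ℝ) ≤ 2*C*c^2*(c*lam^2*(w s) + g s)^2 :=
      mul_nonneg (mul_nonneg (by linarith) (sq_nonneg c)) (sq_nonneg _)
    have t5 : (0:ℝ) ≤ 2*C*c*(C - c)*(g s)^2 :=
      mul_nonneg (mul_nonneg (mul_nonneg (by linarith) hc.le) (by linarith)) (sq_nonneg _)
    nlinarith [t1, t2, t3, t4, t5, hsub]
  -- integral inequality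
  have hmono : (∫ s in r₁..r₂, (2*c^4*lam^4*(w s)^2 - 4*C*c^3*lam^2*(w s * w'' s)))
      ≤ ∫ s in r₁..r₂, 2*C^2*(g s)^2 := by
    apply intervalIntegral.integral_mono_on hle _ _ hpt
    · exact ((hiw2.const_mul _).sub (hiww''.const_mul _))
    · exact hig2.const_mul _
  have hkey : 2*c^4*lam^4*M + 4*C*c^3*lam^2*P ≤ 2*C^2*G := by
    have e1 : (∫ s in r₁..r₂, (2*c^4*lam^4*(w s)^2 - 4*C*c^3*lam^2*(w s * w'' s)))
        = 2*c^4*lam^4*M - 4*C*c^3*lam^2*(∫ s in r₁..r₂, w s * w'' s) := by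
      rw [intervalIntegral.integral_sub (hiw2.const_mul _) (hiww''.const_mul _),
        intervalIntegral.integral_const_mul, intervalIntegral.integral_const_mul]
    have e2 : (∫ s in r₁..r₂, 2*C^2*(g s)^2) = 2*C^2*G := by
      rw [intervalIntegral.integral_const_mul]
    rw [e1, e2] at hmono
    have : (∫ s in r₁..r₂, w s * w'' s) = -P := by linarith
    rw [this] at hmono
    linarith
  -- nonnegativity
  have hM0 : 0 ≤ M := intervalIntegral.integral_nonneg hle (fun s _ => sq_nonneg _)
  have hP0 : 0 ≤ P := intervalIntegral.integral_nonneg hle (fun s _ => sq_nonneg _)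
  have hG0 : 0 ≤ G := intervalIntegral.integral_nonneg hle (fun s _ => sq_nonneg _)
  -- extract the two bounds
  have hMb : lam ^ 2 * Real.sqrt M ≤ (C / c ^ 2) * Real.sqrt G := by
    have h6 : (0:ℝ) ≤ 4*C*c^3*lam^2*P :=
      mul_nonneg (mul_nonneg (mul_nonneg (by linarith) (pow_nonneg hc.le 3))
        (pow_nonneg hlam0.le 2)) hP0
    have h1 : (lam ^ 2) ^ 2 * M ≤ (C / c ^ 2) ^ 2 * G := by
      rw [div_pow, div_mul_eq_mul_div, le_div_iff₀ (by positivity)]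
      nlinarith [hkey, h6]
    calc lam ^ 2 * Real.sqrt M = Real.sqrt ((lam ^ 2) ^ 2 * M) := by
          rw [Real.sqrt_mul (by positivity), Real.sqrt_sq (by positivity)]
      _ ≤ Real.sqrt ((C / c ^ 2) ^ 2 * G) := Real.sqrt_le_sqrt h1
      _ = (C / c ^ 2) * Real.sqrt G := by
          rw [Real.sqrt_mul (by positivity), Real.sqrt_sq (div_pos hC0 (pow_pos hc 2)).le]
  have hPb : lam * Real.sqrt P ≤ Real.sqrt (C / (2 * c ^ 3)) * Real.sqrt G := by
    have h6 : (0:ℝ) ≤ 2*c^4*lam^4*M :=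
      mul_nonneg (mul_nonneg (by positivity) (pow_nonneg hlam0.le 4)) hM0
    have h1 : lam ^ 2 * P ≤ (C / (2 * c ^ 3)) * G := by
      rw [div_mul_eq_mul_div, le_div_iff₀ (by positivity)]
      have h5 : (2*C) * (lam^2 * P * (2*c^3)) ≤ (2*C) * (C * G) := by nlinarith [hkey, h6]
      exact le_of_mul_le_mul_left h5 (by linarith)
    calc lam * Real.sqrt P = Real.sqrt (lam ^ 2 * P) := by
          rw [Real.sqrt_mul (by positivity), Real.sqrt_sq hlam0.le]
      _ ≤ Real.sqrt ((C / (2 * c ^ 3)) * G) := Real.sqrt_le_sqrt h1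
      _ = Real.sqrt (C / (2 * c ^ 3)) * Real.sqrt G :=
          Real.sqrt_mul (div_nonneg hC0.le (by positivity)) _
  calc lam ^ 2 * Real.sqrt M + lam * Real.sqrt P
      ≤ (C / c ^ 2) * Real.sqrt G + Real.sqrt (C / (2 * c ^ 3)) * Real.sqrt G :=
        add_le_add hMb hPb
    _ = (C / c ^ 2 + Real.sqrt (C / (2 * c ^ 3))) * Real.sqrt G := by ring
end

section
/- Let μ ≥ 1, 1 ≤ ν ≤ μ, and suppose a kernel K on ℝ³ × ℝ³ (variables (t,r,ω) with ω ∈ ℝ, schematically) satisfies |K(t₁,r₁,ω₁,t₂,r₂,ω₂)| ≤ ln(2 + μ/ν)·μ^{ρ₁-ρ₂}·ν(|r₁-r₂|ν+1)^{-N}·μ²(|ω₁-ω₂|μ+1)^{-N}·(|t₁-t₂|μ+1)^{-N} for N = 10. If ρ₂ - ρ₁ > 0, 1/p₁ - 1/p₂ ∈ (0,1), 1/q₁ - 1/q₂ ∈ (0,1), and 3/q₂ + ρ₂ = 3/q₁ + ρ₁, then summing over dyadic μ ≥ 1 and 1 ≤ ν ≤ μ (dyadic) yields the bound Σ_{μ,ν}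 sup|K_{μν}| ≤ C·|t₁-t₂|^{-1+1/p₁-1/p₂}·|r₁-r₂|^{-1+1/q₁-1/q₂}·|ω₁-ω₂|^{-2(1-1/q₁+1/q₂)} pointwise for t₁≠t₂, r₁≠r₂, ω₁≠ω₂. -/
lemma aux_decay {x μ θ : ℝ} (hx : 0 < x) (hμ : 1 ≤ μ) (hθ0 : 0 ≤ θ) (hθ : θ ≤ 10) :
    (x*μ+1) ^ (-(10:ℝ)) ≤ x ^ (-θ) * μ ^ (-θ) := by
  have hμ0 : 0 < μ := lt_of_lt_of_le one_pos hμ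
  have hxμ : 0 < x*μ := mul_pos hx hμ0
  calc (x*μ+1)^(-(10:ℝ)) ≤ (x*μ+1)^(-θ) :=
        Real.rpow_le_rpow_of_exponent_le (by linarith) (by linarith)
    _ ≤ (x*μ)^(-θ) := Real.rpow_le_rpow_of_nonpos hxμ (by linarith) (by linarith)
    _ = x^(-θ) * μ^(-θ) := Real.mul_rpow hx.le hμ0.le

lemma two_pow_eq (n : ℕ) (x : ℝ) : ((2:ℝ)^n) ^ x = (2:ℝ)^((n:ℝ)*x) := by
  rw [← Real.rpow_natCast 2 n, ← Real.rpow_mul (by norm_num)]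

lemma two_pow_rpow (y : ℝ) (n : ℕ) : ((2:ℝ)^y)^n = (2:ℝ)^(y*(n:ℝ)) := by
  rw [← Real.rpow_natCast ((2:ℝ)^y) n, ← Real.rpow_mul (by norm_num)]

lemma collect (α β : ℝ) (j k : ℕ) (hjk : j ≤ k) :
    ((2:ℝ)^k) ^ (-(3*α)) * ((2:ℝ)^j) * (((2:ℝ)^j) ^ (-(1-α))) * (((2:ℝ)^k)^2) *
      (((2:ℝ)^k) ^ (-(2-2*α))) * (((2:ℝ)^k) ^ (-(1-β)))
    = ((2:ℝ)^(-α:ℝ))^(k-j) * ((2:ℝ)^(-(1-β)))^k := by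
  have h2 : (0:ℝ) < 2 := two_pos
  rw [two_pow_eq, two_pow_eq, two_pow_eq, two_pow_eq]
  rw [two_pow_rpow, two_pow_rpow]
  rw [show ((2:ℝ)^k)^2 = (2:ℝ)^((k*2:ℕ)) from by rw [pow_mul]]
  rw [← Real.rpow_natCast 2 (k*2), ← Real.rpow_natCast 2 j]
  rw [← Real.rpow_add h2, ← Real.rpow_add h2, ← Real.rpow_add h2, ← Real.rpow_add h2,
    ← Real.rpow_add h2, ← Real.rpow_add h2]
  congr 1
  rw [Nat.cast_sub hjk]
  push_cast
  ring

lemma term_bound (α β a b c : ℝ) (j k : ℕ) (hjk : j ≤ k)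
    (ha : 0 < a) (hb : 0 < b) (hc : 0 < c)
    (hα0 : 0 < α) (hα1 : α < 1) (hβ0 : 0 < β) (hβ1 : β < 1) :
    Real.log (2 + (2:ℝ)^k / (2:ℝ)^j) * ((2:ℝ)^k) ^ (-(3*α)) *
      ((2:ℝ)^j) * (b * (2:ℝ)^j + 1) ^ (-(10:ℝ)) *
      ((2:ℝ)^k)^2 * (c * (2:ℝ)^k + 1) ^ (-(10:ℝ)) *
      (a * (2:ℝ)^k + 1) ^ (-(10:ℝ))
    ≤ Real.log (2 + (2:ℝ)^(k-j)) * ((2:ℝ)^(-α:ℝ))^(k-j) * ((2:ℝ)^(-(1-β)))^k *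
      (a^(-(1-β)) * b^(-(1-α)) * c^(-(2-2*α))) := by
  have hν1 : (1:ℝ) ≤ 2^j := one_le_pow₀ one_le_two
  have hμ1 : (1:ℝ) ≤ 2^k := one_le_pow₀ one_le_two
  have hlg : Real.log (2 + (2:ℝ)^k/(2:ℝ)^j) = Real.log (2 + (2:ℝ)^(k-j)) := by
    rw [pow_sub₀ (2:ℝ) two_ne_zero hjk, div_eq_mul_inv]
  have hlg0 : 0 ≤ Real.log (2 + (2:ℝ)^(k-j)) :=
    Real.log_nonneg (by nlinarith [pow_pos (two_pos (α := ℝ)) (k-j)])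
  have h1 : (b*(2:ℝ)^j+1)^(-(10:ℝ)) ≤ b^(-(1-α)) * ((2:ℝ)^j)^(-(1-α)) :=
    aux_decay hb hν1 (by linarith) (by linarith)
  have h2 : (c*(2:ℝ)^k+1)^(-(10:ℝ)) ≤ c^(-(2-2*α)) * ((2:ℝ)^k)^(-(2-2*α)) :=
    aux_decay hc hμ1 (by linarith) (by linarith)
  have h3 : (a*(2:ℝ)^k+1)^(-(10:ℝ)) ≤ a^(-(1-β)) * ((2:ℝ)^k)^(-(1-β)) :=
    aux_decay ha hμ1 (by linarith) (by linarith)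
  calc Real.log (2 + (2:ℝ)^k / (2:ℝ)^j) * ((2:ℝ)^k) ^ (-(3*α)) *
      ((2:ℝ)^j) * (b * (2:ℝ)^j + 1) ^ (-(10:ℝ)) *
      ((2:ℝ)^k)^2 * (c * (2:ℝ)^k + 1) ^ (-(10:ℝ)) *
      (a * (2:ℝ)^k + 1) ^ (-(10:ℝ))
      = Real.log (2 + (2:ℝ)^(k-j)) *
        (((2:ℝ)^k) ^ (-(3*α)) * ((2:ℝ)^j) * (b * (2:ℝ)^j + 1) ^ (-(10:ℝ)) *
         ((2:ℝ)^k)^2 * (c * (2:ℝ)^k + 1) ^ (-(10:ℝ)) * (a * (2:ℝ)^k + 1) ^ (-(10:ℝ))) := by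
        rw [hlg]; ring
    _ ≤ Real.log (2 + (2:ℝ)^(k-j)) *
        (((2:ℝ)^k) ^ (-(3*α)) * ((2:ℝ)^j) * (b^(-(1-α)) * ((2:ℝ)^j)^(-(1-α))) *
         ((2:ℝ)^k)^2 * (c^(-(2-2*α)) * ((2:ℝ)^k)^(-(2-2*α))) *
         (a^(-(1-β)) * ((2:ℝ)^k)^(-(1-β)))) := by
        apply mul_le_mul_of_nonneg_left ?_ hlg0
        gcongr
    _ = Real.log (2 + (2:ℝ)^(k-j)) *
        ((((2:ℝ)^k) ^ (-(3*α)) * ((2:ℝ)^j) * (((2:ℝ)^j) ^ (-(1-α))) * (((2:ℝ)^k)^2) *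
          (((2:ℝ)^k) ^ (-(2-2*α))) * (((2:ℝ)^k) ^ (-(1-β)))) *
         (a^(-(1-β)) * b^(-(1-α)) * c^(-(2-2*α)))) := by ring
    _ = _ := by rw [collect α β j k hjk]; ring


/-- Dyadic summation of the kernel bounds: summing the localized kernel bounds
over dyadic `μ = 2^k ≥ 1` and dyadic `1 ≤ ν = 2^j ≤ μ` yields the
Hardy–Littlewood–Sobolev-type kernel bound. -/
theorem dyadic_kernel_summation (ρ₁ ρ₂ p₁ p₂ q₁ q₂ : ℝ)
    (hρ : 0 < ρ₂ - ρ₁)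
    (hp : 0 < 1/p₁ - 1/p₂) (hp' : 1/p₁ - 1/p₂ < 1)
    (hq : 0 < 1/q₁ - 1/q₂) (hq' : 1/q₁ - 1/q₂ < 1)
    (hscale : 3/q₂ + ρ₂ = 3/q₁ + ρ₁) :
    ∃ C > (0:ℝ), ∀ t₁ t₂ r₁ r₂ ω₁ ω₂ : ℝ, t₁ ≠ t₂ → r₁ ≠ r₂ → ω₁ ≠ ω₂ →
      (∑' k : ℕ, ∑ j ∈ Finset.range (k+1),
        Real.log (2 + (2:ℝ)^k / (2:ℝ)^j) * ((2:ℝ)^k) ^ (ρ₁ - ρ₂) *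
          ((2:ℝ)^j) * (|r₁ - r₂| * (2:ℝ)^j + 1) ^ (-(10:ℝ)) *
          ((2:ℝ)^k)^2 * (|ω₁ - ω₂| * (2:ℝ)^k + 1) ^ (-(10:ℝ)) *
          (|t₁ - t₂| * (2:ℝ)^k + 1) ^ (-(10:ℝ)))
      ≤ C * |t₁ - t₂| ^ (-1 + 1/p₁ - 1/p₂) * |r₁ - r₂| ^ (-1 + 1/q₁ - 1/q₂) *
          |ω₁ - ω₂| ^ (-2 * (1 - 1/q₁ + 1/q₂)) := by
  set α := 1/q₁ - 1/q₂ with hα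
  set β := 1/p₁ - 1/p₂ with hβ
  have hα0 : 0 < α := hq
  have hα1 : α < 1 := hq'
  have hβ0 : 0 < β := hp
  have hβ1 : β < 1 := hp'
  have hρ' : ρ₁ - ρ₂ = -(3*α) := by
    have e1 : 3/q₂ = 3*(1/q₂) := by ring
    have e2 : 3/q₁ = 3*(1/q₁) := by ring
    rw [hα]; rw [e1, e2] at hscale; linarith
  -- geometric ratios
  have hr0 : (0:ℝ) < (2:ℝ)^(-α:ℝ) := Real.rpow_pos_of_pos two_pos _
  have hr1 : (2:ℝ)^(-α:ℝ) < 1 :=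
    Real.rpow_lt_one_of_one_lt_of_neg one_lt_two (by linarith)
  have hs0 : (0:ℝ) < (2:ℝ)^(-(1-β)) := Real.rpow_pos_of_pos two_pos _
  have hs1 : (2:ℝ)^(-(1-β)) < 1 :=
    Real.rpow_lt_one_of_one_lt_of_neg one_lt_two (by linarith)
  have hlog2 : (0:ℝ) ≤ Real.log 2 := Real.log_nonneg one_le_two
  -- the log-weighted geometric sum
  have hSsumm : Summable (fun m : ℕ => ((m:ℝ)+2) * Real.log 2 * ((2:ℝ)^(-α:ℝ))^m) := by
    have h1 : Summable (fun m : ℕ => (m:ℝ) * ((2:ℝ)^(-α:ℝ))^m) := by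
      simpa using summable_pow_mul_geometric_of_norm_lt_one 1
        (r := (2:ℝ)^(-α:ℝ)) (by rw [Real.norm_eq_abs, abs_of_pos hr0]; exact hr1)
    have h2 : Summable (fun m : ℕ => ((2:ℝ)^(-α:ℝ))^m) :=
      summable_geometric_of_lt_one hr0.le hr1
    exact ((h1.add (h2.mul_left 2)).mul_right (Real.log 2)).congr (fun m => by ring)
  set S := ∑' m : ℕ, ((m:ℝ)+2) * Real.log 2 * ((2:ℝ)^(-α:ℝ))^m with hSdef
  have hS0 : 0 ≤ S :=
    tsum_nonneg (fun m => by positivity)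
  have hsinv : (0:ℝ) < (1 - (2:ℝ)^(-(1-β)))⁻¹ := by
    rw [inv_pos]; linarith
  refine ⟨S * (1 - (2:ℝ)^(-(1-β)))⁻¹ + 1, by nlinarith, ?_⟩
  intro t₁ t₂ r₁ r₂ ω₁ ω₂ ht hrr hω
  set a := |t₁ - t₂| with ha'
  set b := |r₁ - r₂| with hb'
  set c := |ω₁ - ω₂| with hc'
  have ha : 0 < a := abs_pos.2 (sub_ne_zero.2 ht)
  have hb : 0 < b := abs_pos.2 (sub_ne_zero.2 hrr)
  have hc : 0 < c := abs_pos.2 (sub_ne_zero.2 hω)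
  have hA0 : 0 < a^(-(1-β)) * b^(-(1-α)) * c^(-(2-2*α)) := by positivity
  have hRHS : (S * (1 - (2:ℝ)^(-(1-β)))⁻¹ + 1) * a ^ (-1 + 1/p₁ - 1/p₂) *
      b ^ (-1 + 1/q₁ - 1/q₂) * c ^ (-2 * (1 - 1/q₁ + 1/q₂))
      = (S * (1 - (2:ℝ)^(-(1-β)))⁻¹ + 1) * (a^(-(1-β)) * b^(-(1-α)) * c^(-(2-2*α))) := by
    rw [show -1 + 1/p₁ - 1/p₂ = -(1-β) from by rw [hβ]; ring,
        show -1 + 1/q₁ - 1/q₂ = -(1-α) from by rw [hα]; ring,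
        show -2 * (1 - 1/q₁ + 1/q₂) = -(2-2*α) from by rw [hα]; ring]
    ring
  rw [hRHS]
  simp only [hρ']
  apply tsum_le_of_sum_le' (by positivity)
  intro u
  have hinner : ∀ k : ℕ,
      (∑ j ∈ Finset.range (k+1),
        Real.log (2 + (2:ℝ)^k / (2:ℝ)^j) * ((2:ℝ)^k) ^ (-(3*α)) *
          ((2:ℝ)^j) * (b * (2:ℝ)^j + 1) ^ (-(10:ℝ)) *
          ((2:ℝ)^k)^2 * (c * (2:ℝ)^k + 1) ^ (-(10:ℝ)) *
          (a * (2:ℝ)^k + 1) ^ (-(10:ℝ)))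
      ≤ S * (a^(-(1-β)) * b^(-(1-α)) * c^(-(2-2*α))) * ((2:ℝ)^(-(1-β)))^k := by
    intro k
    calc (∑ j ∈ Finset.range (k+1),
        Real.log (2 + (2:ℝ)^k / (2:ℝ)^j) * ((2:ℝ)^k) ^ (-(3*α)) *
          ((2:ℝ)^j) * (b * (2:ℝ)^j + 1) ^ (-(10:ℝ)) *
          ((2:ℝ)^k)^2 * (c * (2:ℝ)^k + 1) ^ (-(10:ℝ)) *
          (a * (2:ℝ)^k + 1) ^ (-(10:ℝ)))
        ≤ ∑ j ∈ Finset.range (k+1),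
            Real.log (2 + (2:ℝ)^(k-j)) * ((2:ℝ)^(-α:ℝ))^(k-j) * ((2:ℝ)^(-(1-β)))^k *
              (a^(-(1-β)) * b^(-(1-α)) * c^(-(2-2*α))) := by
          apply Finset.sum_le_sum
          intro j hj
          exact term_bound α β a b c j k (Nat.lt_succ_iff.mp (Finset.mem_range.mp hj))
            ha hb hc hα0 hα1 hβ0 hβ1
      _ = (∑ j ∈ Finset.range (k+1),
            Real.log (2 + (2:ℝ)^(k-j)) * ((2:ℝ)^(-α:ℝ))^(k-j)) *
            (((2:ℝ)^(-(1-β)))^k * (a^(-(1-β)) * b^(-(1-α)) * c^(-(2-2*α)))) := by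
          rw [Finset.sum_mul]
          exact Finset.sum_congr rfl fun j _ => by ring
      _ ≤ S * (((2:ℝ)^(-(1-β)))^k * (a^(-(1-β)) * b^(-(1-α)) * c^(-(2-2*α)))) := by
          apply mul_le_mul_of_nonneg_right ?_ (by positivity)
          have hrefl := Finset.sum_range_reflect
            (fun m => Real.log (2 + (2:ℝ)^m) * ((2:ℝ)^(-α:ℝ))^m) (k+1)
          simp only [Nat.add_sub_cancel] at hrefl
          calc (∑ j ∈ Finset.range (k+1),
              Real.log (2 + (2:ℝ)^(k-j)) * ((2:ℝ)^(-α:ℝ))^(k-j))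
              = ∑ m ∈ Finset.range (k+1), Real.log (2 + (2:ℝ)^m) * ((2:ℝ)^(-α:ℝ))^m := hrefl
            _ ≤ ∑ m ∈ Finset.range (k+1), ((m:ℝ)+2) * Real.log 2 * ((2:ℝ)^(-α:ℝ))^m := by
                apply Finset.sum_le_sum
                intro m _
                apply mul_le_mul_of_nonneg_right ?_ (pow_nonneg hr0.le m)
                have h1 : (2:ℝ)^m ≤ 2^(m+1) := pow_le_pow_right₀ one_le_two (Nat.le_succ m)
                have h2 : (2:ℝ) ≤ 2^(m+1) := by
                  calc (2:ℝ) = 2^1 := (pow_one 2).symm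
                    _ ≤ 2^(m+1) := pow_le_pow_right₀ one_le_two (Nat.succ_le_succ (Nat.zero_le m))
                calc Real.log (2 + (2:ℝ)^m) ≤ Real.log ((2:ℝ)^(m+2)) := by
                      apply Real.log_le_log (by positivity)
                      calc (2:ℝ) + 2^m ≤ 2^(m+1) + 2^(m+1) := by linarith
                        _ = 2^(m+2) := by ring
                  _ = ((m+2:ℕ):ℝ) * Real.log 2 := by rw [Real.log_pow]
                  _ = ((m:ℝ)+2) * Real.log 2 := by push_cast; ring
            _ ≤ S := Summable.sum_le_tsum _ (fun i _ => by positivity) hSsumm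
      _ = S * (a^(-(1-β)) * b^(-(1-α)) * c^(-(2-2*α))) * ((2:ℝ)^(-(1-β)))^k := by ring
  calc (∑ k ∈ u, ∑ j ∈ Finset.range (k+1),
      Real.log (2 + (2:ℝ)^k / (2:ℝ)^j) * ((2:ℝ)^k) ^ (-(3*α)) *
        ((2:ℝ)^j) * (b * (2:ℝ)^j + 1) ^ (-(10:ℝ)) *
        ((2:ℝ)^k)^2 * (c * (2:ℝ)^k + 1) ^ (-(10:ℝ)) *
        (a * (2:ℝ)^k + 1) ^ (-(10:ℝ)))
      ≤ ∑ k ∈ u, S * (a^(-(1-β)) * b^(-(1-α)) * c^(-(2-2*α))) * ((2:ℝ)^(-(1-β)))^k :=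
        Finset.sum_le_sum (fun k _ => hinner k)
    _ = S * (a^(-(1-β)) * b^(-(1-α)) * c^(-(2-2*α))) * ∑ k ∈ u, ((2:ℝ)^(-(1-β)))^k := by
        rw [Finset.mul_sum]
    _ ≤ S * (a^(-(1-β)) * b^(-(1-α)) * c^(-(2-2*α))) * (1 - (2:ℝ)^(-(1-β)))⁻¹ := by
        apply mul_le_mul_of_nonneg_left ?_ (by positivity)
        calc (∑ k ∈ u, ((2:ℝ)^(-(1-β)))^k) ≤ ∑' k : ℕ, ((2:ℝ)^(-(1-β)))^k :=
              Summable.sum_le_tsum u (fun i _ => by positivity)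
                (summable_geometric_of_lt_one hs0.le hs1)
          _ = (1 - (2:ℝ)^(-(1-β)))⁻¹ := tsum_geometric_of_lt_one hs0.le hs1
    _ = (S * (1 - (2:ℝ)^(-(1-β)))⁻¹) * (a^(-(1-β)) * b^(-(1-α)) * c^(-(2-2*α))) := by ring
    _ ≤ (S * (1 - (2:ℝ)^(-(1-β)))⁻¹ + 1) * (a^(-(1-β)) * b^(-(1-α)) * c^(-(2-2*α))) := by
        apply mul_le_mul_of_nonneg_right (by linarith) hA0.le
end
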